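/- arXiv:1512.07118 — 9 statements merged into one kernel-verified Lean document; each statement's English description precedes it below -/
import Mathlib

section
/- Let A be an n×n complex matrix with eigenvalue λ and associated eigenvector u (Au = λu, u ≠ 0), and let v be any vector in ℂⁿ. Then the characteristic polynomial of à = A + u v* equals the characteristic polynomial of A multiplied by (z - λ - v*u)/(z - λ); in particular, the multiset of eigenvalues of à is obtained from that of A by replacing one occurrence of λ with λ + v*u. -/
open Matrix Polynomial


lemma eval_charpoly' {n : ℕ} (M : Matrix (Fin n) (Fin n) ℂ) (z : ℂ) :
    eval z M.charpoly = (z • (1 : Matrix (Fin n) (Fin n) ℂ) - M).det := by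
  rw [Matrix.charpoly, show (eval z) = (Polynomial.evalRingHom z : ℂ[X] →+* ℂ) from rfl,
    RingHom.map_det]
  rw [RingHom.mapMatrix_apply]
  congr 1
  ext i j
  by_cases h : i = j <;>
    simp [h, charmatrix_apply, Matrix.one_apply, Matrix.smul_apply, Matrix.smul_apply]


theorem brauer_charpoly (n : ℕ) (A : Matrix (Fin n) (Fin n) ℂ) (lam : ℂ)
    (u v : Matrix (Fin n) (Fin 1) ℂ) (hu : u ≠ 0) (huA : A * u = lam • u) :
    (X - C lam) * (A + u * vᴴ).charpoly
      = (X - C (lam + (vᴴ * u) 0 0)) * A.charpoly := by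
  apply Polynomial.eq_of_infinite_eval_eq
  have hfin : ({z : ℂ | eval z A.charpoly = 0} ∪ {lam}).Finite := by
    apply Set.Finite.union _ (Set.finite_singleton _)
    exact Polynomial.finite_setOf_isRoot (A.charpoly_monic.ne_zero)
  apply Set.Infinite.mono _ (hfin.infinite_compl)
  rintro z hz
  simp only [Set.mem_compl_iff, Set.mem_union, Set.mem_singleton_iff, not_or,
    Set.mem_setOf_eq] at hz
  obtain ⟨hz1, hz2⟩ := hz
  have hzl : z - lam ≠ 0 := sub_ne_zero.mpr hz2
  set B : Matrix (Fin n) (Fin n) ℂ := z • 1 - A with hB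
  have hdet : B.det ≠ 0 := by rwa [← eval_charpoly']
  have hunit : IsUnit B.det := isUnit_iff_ne_zero.mpr hdet
  have hBu : B * u = (z - lam) • u := by
    rw [hB, Matrix.sub_mul, Matrix.smul_mul, Matrix.one_mul, huA, sub_smul]
  have hBinvu : B⁻¹ * u = (z - lam)⁻¹ • u := by
    have := congrArg (fun M => B⁻¹ * M) hBu
    simp only [Matrix.mul_smul, ← Matrix.mul_assoc,
      Matrix.nonsing_inv_mul B hunit, Matrix.one_mul] at this
    exact ((inv_smul_eq_iff₀ hzl).mpr this).symm
  have key : (B + (-u) * vᴴ).det = B.det * (1 - (z - lam)⁻¹ * (vᴴ * u) 0 0) := by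
    rw [Matrix.det_add_mul (-u) vᴴ hunit]
    congr 1
    rw [Matrix.mul_neg, Matrix.mul_assoc, hBinvu, Matrix.mul_smul, Matrix.det_unique]
    simp [sub_eq_add_neg, mul_comm]
  have hcp1 : eval z (A + u * vᴴ).charpoly = (B + (-u) * vᴴ).det := by
    rw [eval_charpoly']
    congr 1
    rw [hB]
    rw [Matrix.neg_mul]
    abel
  show _ = _
  rw [eval_mul, eval_mul, eval_sub, eval_sub, eval_X, eval_C, eval_C, hcp1, key,
    eval_charpoly', ← hB]
  field_simp
  ring
end

section
/- Let A(z) = Σ_{i=0}^d z^i A_i be an n×n matrix polynomial, λ ∈ ℂ and u ≠ 0 with A(λ)u = 0, μ ∈ ℂ, and v ∈ ℂⁿ with v*u = 1; set Q = uv*. Then for all z ≠ λ, A(z)(I + ((λ-μ)/(z-λ))Q) = Σ_{i=0}^d z^i Ã_i, where Ã_d = A_d and Ã_i = A_i + (λ-μ) Σ_{k=0}^{d-i-1} λ^k A_{k+i+1} Q for 0 ≤ i ≤ d-1. In particular the shifted function is again a matrix polynomial of degree at most d. -/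
open Matrix Finset

theorem brauer_matpol (n d : ℕ) (A : ℕ → Matrix (Fin n) (Fin n) ℂ) (lam mu : ℂ)
    (u v : Matrix (Fin n) (Fin 1) ℂ) (hu : u ≠ 0)
    (huA : (∑ i ∈ range (d + 1), lam ^ i • A i) * u = 0)
    (hv : (vᴴ * u) 0 0 = 1)
    (At : ℕ → Matrix (Fin n) (Fin n) ℂ)
    (hAtd : At d = A d)
    (hAti : ∀ i < d, At i = A i + (lam - mu) •
      ∑ k ∈ range (d - i), lam ^ k • (A (k + i + 1) * (u * vᴴ)))
    (z : ℂ) (hz : z ≠ lam) :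
    (∑ i ∈ range (d + 1), z ^ i • A i) *
        (1 + ((lam - mu) / (z - lam)) • (u * vᴴ))
      = ∑ i ∈ range (d + 1), z ^ i • At i := by
  set Q : Matrix (Fin n) (Fin n) ℂ := u * vᴴ with hQ
  set c : ℂ := (lam - mu) / (z - lam) with hc
  have hzl : z - lam ≠ 0 := sub_ne_zero.mpr hz
  -- A(λ) * Q = 0
  have hAQ : (∑ i ∈ range (d + 1), lam ^ i • A i) * Q = 0 := by
    rw [hQ, ← Matrix.mul_assoc, huA, Matrix.zero_mul]
  -- A(z) * Q = ∑ (z^i - lam^i) • (A i * Q)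
  have key : (∑ i ∈ range (d + 1), z ^ i • A i) * Q
      = ∑ i ∈ range (d + 1), (z ^ i - lam ^ i) • (A i * Q) := by
    have : (∑ i ∈ range (d + 1), z ^ i • A i) * Q
        = (∑ i ∈ range (d + 1), z ^ i • A i) * Q
          - (∑ i ∈ range (d + 1), lam ^ i • A i) * Q := by
      rw [hAQ, sub_zero]
    rw [this, Finset.sum_mul, Finset.sum_mul, ← Finset.sum_sub_distrib]
    refine Finset.sum_congr rfl fun i _ => ?_
    rw [Matrix.smul_mul, Matrix.smul_mul, sub_smul]
  have hcoef : ∀ i : ℕ, c * (z ^ i - lam ^ i)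
      = (lam - mu) * ∑ k ∈ range i, z ^ k * lam ^ (i - 1 - k) := by
    intro i
    rw [hc, div_mul_eq_mul_div, mul_comm, ← geom_sum₂_mul, mul_comm (lam - mu)]
    field_simp
  calc (∑ i ∈ range (d + 1), z ^ i • A i) * (1 + c • Q)
      = (∑ i ∈ range (d + 1), z ^ i • A i)
        + c • ((∑ i ∈ range (d + 1), z ^ i • A i) * Q) := by
        rw [Matrix.mul_add, Matrix.mul_one, Matrix.mul_smul]
    _ = (∑ i ∈ range (d + 1), z ^ i • A i)
        + ∑ i ∈ range (d + 1), ((lam - mu) *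
            ∑ k ∈ range i, z ^ k * lam ^ (i - 1 - k)) • (A i * Q) := by
        rw [key, Finset.smul_sum]
        congr 1
        refine Finset.sum_congr rfl fun i _ => ?_
        rw [smul_smul, hcoef]
    _ = (∑ i ∈ range (d + 1), z ^ i • A i)
        + ∑ i ∈ range (d + 1), ∑ k ∈ range i,
            ((lam - mu) * (z ^ k * lam ^ (i - 1 - k))) • (A i * Q) := by
        congr 1
        refine Finset.sum_congr rfl fun i _ => ?_
        rw [Finset.mul_sum, Finset.sum_smul]
    _ = (∑ i ∈ range (d + 1), z ^ i • A i)
        + ∑ j ∈ range d, ∑ k ∈ range (j + 1),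
            ((lam - mu) * (z ^ k * lam ^ (j - k))) • (A (j + 1) * Q) := by
        congr 1
        rw [Finset.sum_range_succ']
        simp only [Finset.range_zero, Finset.sum_empty, add_zero,
          Nat.add_sub_cancel]
    _ = (∑ i ∈ range (d + 1), z ^ i • A i)
        + ∑ i ∈ range d, ∑ k ∈ range (d - i),
            ((lam - mu) * (z ^ i * lam ^ k)) • (A (k + i + 1) * Q) := by
        congr 1
        rw [← Finset.sum_range_diag_flip d
          (fun a b => ((lam - mu) * (z ^ a * lam ^ b)) • (A (b + a + 1) * Q))]
        refine Finset.sum_congr rfl fun j hj => ?_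
        refine Finset.sum_congr rfl fun k hk => ?_
        simp only [Finset.mem_range] at hk
        have h1 : j - k + k + 1 = j + 1 := by omega
        rw [h1]
    _ = ∑ i ∈ range (d + 1), z ^ i • At i := by
        have hterm : ∀ i ∈ range d, z ^ i • At i = z ^ i • A i
            + ∑ k ∈ range (d - i),
                ((lam - mu) * (z ^ i * lam ^ k)) • (A (k + i + 1) * Q) := by
          intro i hi
          rw [hAti i (Finset.mem_range.mp hi), smul_add]
          congr 1
          simp only [Finset.smul_sum, smul_smul]
          refine Finset.sum_congr rfl fun k _ => ?_
          congr 1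
          ring
        rw [Finset.sum_range_succ (f := fun i => z ^ i • At i), hAtd,
          Finset.sum_range_succ (f := fun i => z ^ i • A i),
          Finset.sum_congr rfl hterm, Finset.sum_add_distrib]
        abel
end

section
/- Let A ∈ ℂ^{n×n}, U ∈ ℂ^{n×m} of full column rank and Λ ∈ ℂ^{m×m} with AU = UΛ (m < n). Let V ∈ ℂ^{n×m} with V*U = I_m and S ∈ ℂ^{m×m} arbitrary. Then for every z not an eigenvalue of Λ, (zI - A)(I + U(zI - Λ)^{-1}(Λ - S)V*) = zI - Ã, where Ã = A - U(Λ - S)V*. -/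
open Matrix

theorem brauer_multishift (n m : ℕ) (hmn : m < n)
    (A : Matrix (Fin n) (Fin n) ℂ)
    (U V : Matrix (Fin n) (Fin m) ℂ) (Lam S : Matrix (Fin m) (Fin m) ℂ)
    (hU : U.rank = m) (hAU : A * U = U * Lam)
    (hVU : Vᴴ * U = 1)
    (z : ℂ) (hz : (z • (1 : Matrix (Fin m) (Fin m) ℂ) - Lam).det ≠ 0) :
    (z • (1 : Matrix (Fin n) (Fin n) ℂ) - A) *
        (1 + U * (z • (1 : Matrix (Fin m) (Fin m) ℂ) - Lam)⁻¹ * (Lam - S) * Vᴴ)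
      = z • (1 : Matrix (Fin n) (Fin n) ℂ) - (A - U * (Lam - S) * Vᴴ) := by
  set B : Matrix (Fin m) (Fin m) ℂ := z • (1 : Matrix (Fin m) (Fin m) ℂ) - Lam with hB
  have hBinv : B * B⁻¹ = 1 := Matrix.mul_nonsing_inv B (isUnit_iff_ne_zero.mpr hz)
  have hkey : (z • (1 : Matrix (Fin n) (Fin n) ℂ) - A) * U = U * B := by
    rw [Matrix.sub_mul, Matrix.mul_sub, hAU, Matrix.smul_mul, Matrix.mul_smul, Matrix.one_mul, Matrix.mul_one]
  have h2 : (z • (1 : Matrix (Fin n) (Fin n) ℂ) - A) *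
      (U * B⁻¹ * (Lam - S) * Vᴴ) = U * (Lam - S) * Vᴴ := by
    calc (z • (1 : Matrix (Fin n) (Fin n) ℂ) - A) * (U * B⁻¹ * (Lam - S) * Vᴴ)
        = ((z • (1 : Matrix (Fin n) (Fin n) ℂ) - A) * U) * B⁻¹ * (Lam - S) * Vᴴ := by
          simp only [Matrix.mul_assoc]
      _ = U * (B * B⁻¹) * (Lam - S) * Vᴴ := by rw [hkey]; simp only [Matrix.mul_assoc]
      _ = U * (Lam - S) * Vᴴ := by rw [hBinv, Matrix.mul_one]
  rw [Matrix.mul_add, Matrix.mul_one, h2]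
  abel
end

section
/- With A, U, Λ, V, S as in the multishift setting and Ã = A - U(Λ - S)V*, one has det(zI - Ã) = det(zI - S) · det(zI - A) / det(zI - Λ) for all z avoiding the spectrum of Λ; hence the eigenvalues of Ã are those of A with the eigenvalues of Λ replaced by the eigenvalues of S. -/
open Matrix

theorem brauer_multishift_det (n m : ℕ) (hmn : m < n)
    (A : Matrix (Fin n) (Fin n) ℂ)
    (U V : Matrix (Fin n) (Fin m) ℂ) (Lam S : Matrix (Fin m) (Fin m) ℂ)
    (hU : U.rank = m) (hAU : A * U = U * Lam)
    (hVU : Vᴴ * U = 1)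
    (z : ℂ) (hz : (z • (1 : Matrix (Fin m) (Fin m) ℂ) - Lam).det ≠ 0) :
    (z • (1 : Matrix (Fin n) (Fin n) ℂ) - (A - U * (Lam - S) * Vᴴ)).det
      = (z • (1 : Matrix (Fin m) (Fin m) ℂ) - S).det *
          (z • (1 : Matrix (Fin n) (Fin n) ℂ) - A).det /
          (z • (1 : Matrix (Fin m) (Fin m) ℂ) - Lam).det := by
  set B : Matrix (Fin n) (Fin n) ℂ := z • 1 - A with hB
  set W : Matrix (Fin m) (Fin m) ℂ := z • 1 - Lam with hW
  set X : Matrix (Fin m) (Fin m) ℂ := Lam - S with hX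
  have hWunit : IsUnit W.det := isUnit_iff_ne_zero.mpr hz
  have hWinv : W * W⁻¹ = 1 := Matrix.mul_nonsing_inv _ hWunit
  have hBU : B * U = U * W := by
    rw [hB, hW, Matrix.sub_mul, Matrix.mul_sub, hAU, Matrix.smul_mul, Matrix.mul_smul,
      Matrix.one_mul, Matrix.mul_one]
  have hlhs : z • (1 : Matrix (Fin n) (Fin n) ℂ) - (A - U * (Lam - S) * Vᴴ)
      = B + U * X * Vᴴ := by
    rw [hB, hX]; abel
  set P : Matrix (Fin n ⊕ Fin m) (Fin n ⊕ Fin m) ℂ := fromBlocks B (-U) (X * Vᴴ) 1 with hP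
  have h1 : P.det = (B + U * X * Vᴴ).det := by
    have hQP : (fromBlocks 1 U 0 1 : Matrix (Fin n ⊕ Fin m) (Fin n ⊕ Fin m) ℂ) * P
        = fromBlocks (B + U * X * Vᴴ) 0 (X * Vᴴ) 1 := by
      rw [hP, Matrix.fromBlocks_multiply]
      congr 1 <;> simp [Matrix.mul_assoc]
    have hdQ : (fromBlocks 1 U 0 1 : Matrix (Fin n ⊕ Fin m) (Fin n ⊕ Fin m) ℂ).det = 1 := by
      simp [Matrix.det_fromBlocks_zero₂₁]
    have := congrArg Matrix.det hQP
    rw [Matrix.det_mul, hdQ, one_mul, Matrix.det_fromBlocks_zero₁₂] at this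
    simpa using this
  have h2 : P.det = B.det * ((z • (1 : Matrix (Fin m) (Fin m) ℂ) - S).det * W.det⁻¹) := by
    have eTR : B * (U * W⁻¹) + (-U) * (1 : Matrix (Fin m) (Fin m) ℂ) = 0 := by
      rw [← Matrix.mul_assoc, hBU, Matrix.mul_assoc, hWinv, Matrix.mul_one, Matrix.mul_one]
      simp
    have key : X * Vᴴ * (U * W⁻¹) = X * W⁻¹ := by
      rw [Matrix.mul_assoc, ← Matrix.mul_assoc Vᴴ, hVU, Matrix.one_mul]
    have hXW : z • (1 : Matrix (Fin m) (Fin m) ℂ) - S = X + W := by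
      rw [hX, hW]; abel
    have eBR : X * Vᴴ * (U * W⁻¹) + (1 : Matrix (Fin m) (Fin m) ℂ) * 1
        = (z • (1 : Matrix (Fin m) (Fin m) ℂ) - S) * W⁻¹ := by
      rw [key, hXW, Matrix.add_mul, hWinv, Matrix.one_mul]
    have hPR : P * (fromBlocks 1 (U * W⁻¹) 0 1 : Matrix (Fin n ⊕ Fin m) (Fin n ⊕ Fin m) ℂ)
        = fromBlocks B 0 (X * Vᴴ) ((z • (1 : Matrix (Fin m) (Fin m) ℂ) - S) * W⁻¹) := by
      rw [hP, Matrix.fromBlocks_multiply, eTR, eBR]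
      congr 1 <;> simp
    have hdR : (fromBlocks 1 (U * W⁻¹) 0 1 : Matrix (Fin n ⊕ Fin m) (Fin n ⊕ Fin m) ℂ).det = 1 := by
      simp [Matrix.det_fromBlocks_zero₂₁]
    have := congrArg Matrix.det hPR
    rw [Matrix.det_mul, hdR, mul_one, Matrix.det_fromBlocks_zero₁₂, Matrix.det_mul,
      Matrix.det_nonsing_inv, Ring.inverse_eq_inv'] at this
    exact this
  rw [hlhs, ← h1, h2]
  field_simp
end

section
/- Let A(z) = Σ_{i=0}^d z^i A_i with Σ_{i=0}^d A_i U Λ^i = 0, U full column rank, V*U = I_m, S ∈ ℂ^{m×m} arbitrary. Then for z not in the spectrum of Λ, A(z)(I + U(zI-Λ)^{-1}(Λ-S)V*) = Σ_{i=0}^d z^i Ã_i where Ã_d = A_d and Ã_j = A_j + Σ_{k=0}^{d-j-1} A_{k+j+1} U Λ^k (Λ - S) V* for 0 ≤ j ≤ d-1; moreover det Ã(z) = det(zI-S) det A(z) / det(zI-Λ). -/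
open Matrix Finset

theorem brauer_multishift_matpol (n m d : ℕ)
    (A : ℕ → Matrix (Fin n) (Fin n) ℂ)
    (U V : Matrix (Fin n) (Fin m) ℂ) (Lam S : Matrix (Fin m) (Fin m) ℂ)
    (hU : U.rank = m)
    (hsolv : ∑ i ∈ range (d + 1), A i * U * Lam ^ i = 0)
    (hVU : Vᴴ * U = 1)
    (At : ℕ → Matrix (Fin n) (Fin n) ℂ)
    (hAtd : At d = A d)
    (hAtj : ∀ j < d, At j = A j +
      ∑ k ∈ range (d - j), A (k + j + 1) * U * Lam ^ k * (Lam - S) * Vᴴ)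
    (z : ℂ) (hz : (z • (1 : Matrix (Fin m) (Fin m) ℂ) - Lam).det ≠ 0) :
    (∑ i ∈ range (d + 1), z ^ i • A i) *
        (1 + U * (z • (1 : Matrix (Fin m) (Fin m) ℂ) - Lam)⁻¹ * (Lam - S) * Vᴴ)
      = ∑ i ∈ range (d + 1), z ^ i • At i ∧
    (∑ i ∈ range (d + 1), z ^ i • At i).det
      = (z • (1 : Matrix (Fin m) (Fin m) ℂ) - S).det *
          (∑ i ∈ range (d + 1), z ^ i • A i).det /
          (z • (1 : Matrix (Fin m) (Fin m) ℂ) - Lam).det := by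
  set M : Matrix (Fin m) (Fin m) ℂ := z • (1 : Matrix (Fin m) (Fin m) ℂ) - Lam with hMdef
  have hM : IsUnit M.det := isUnit_iff_ne_zero.mpr hz
  have hMinv : M * M⁻¹ = 1 := mul_nonsing_inv M hM
  have hinvM : M⁻¹ * M = 1 := nonsing_inv_mul M hM
  have hc : Commute (z • (1 : Matrix (Fin m) (Fin m) ℂ)) Lam := by
    unfold Commute SemiconjBy
    rw [smul_mul_assoc, mul_smul_comm, one_mul, mul_one]
  -- the "geometric" factor
  set G : ℕ → Matrix (Fin m) (Fin m) ℂ :=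
    fun i => ∑ k ∈ range i, (z • (1 : Matrix (Fin m) (Fin m) ℂ)) ^ k * Lam ^ (i - 1 - k)
    with hGdef
  have key : ∑ i ∈ range (d + 1), z ^ i • (A i * U) =
      (∑ i ∈ range (d + 1), A i * U * G i) * M := by
    rw [Matrix.sum_mul]
    have hterm : ∀ i, A i * U * G i * M = z ^ i • (A i * U) - A i * U * Lam ^ i := by
      intro i
      rw [Matrix.mul_assoc (A i * U)]
      rw [show G i * M = (z • (1 : Matrix (Fin m) (Fin m) ℂ)) ^ i - Lam ^ i from
        hc.geom_sum₂_mul i]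
      rw [Matrix.mul_sub, smul_pow, one_pow, Matrix.mul_smul, Matrix.mul_one]
    rw [Finset.sum_congr rfl fun i _ => hterm i, Finset.sum_sub_distrib, hsolv, sub_zero]
  -- main product identity
  have main : (∑ i ∈ range (d + 1), z ^ i • A i) *
        (1 + U * M⁻¹ * (Lam - S) * Vᴴ) = ∑ i ∈ range (d + 1), z ^ i • At i := by
    have expand : (∑ i ∈ range (d + 1), z ^ i • A i) * (1 + U * M⁻¹ * (Lam - S) * Vᴴ)
        = (∑ i ∈ range (d + 1), z ^ i • A i)
          + (∑ i ∈ range (d + 1), z ^ i • (A i * U)) * (M⁻¹ * ((Lam - S) * Vᴴ)) := by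
      rw [Matrix.mul_add, Matrix.mul_one, Matrix.sum_mul]
      congr 1
      rw [Matrix.sum_mul]
      refine Finset.sum_congr rfl fun i _ => ?_
      rw [Matrix.smul_mul, Matrix.smul_mul]
      congr 1
      simp only [Matrix.mul_assoc]
    rw [expand, key, Matrix.mul_assoc, ← Matrix.mul_assoc M, hMinv, Matrix.one_mul]
    -- now show A(z) + (∑ A i U G i) * ((Lam-S) Vᴴ) = Ã(z)
    have rhs_split : ∑ i ∈ range (d + 1), z ^ i • At i
        = (∑ i ∈ range (d + 1), z ^ i • A i)
          + ∑ j ∈ range d, z ^ j •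
            (∑ k ∈ range (d - j), A (k + j + 1) * U * Lam ^ k * (Lam - S) * Vᴴ) := by
      rw [Finset.sum_range_succ, Finset.sum_range_succ (f := fun i => z ^ i • A i), hAtd]
      rw [add_right_comm]
      congr 1
      rw [← Finset.sum_add_distrib]
      refine Finset.sum_congr rfl fun j hj => ?_
      rw [hAtj j (mem_range.mp hj), smul_add]
    rw [rhs_split]
    congr 1
    -- double sum reindexing
    rw [Matrix.sum_mul]
    have lhs_eq : ∀ i ∈ range (d + 1), A i * U * G i * ((Lam - S) * Vᴴ)
        = ∑ k ∈ range i, z ^ k • (A i * U * Lam ^ (i - 1 - k) * (Lam - S) * Vᴴ) := by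
      intro i _
      rw [hGdef]
      simp only [Matrix.mul_sum, Matrix.sum_mul]
      refine Finset.sum_congr rfl fun k _ => ?_
      rw [smul_pow, one_pow, Matrix.smul_mul, Matrix.mul_smul, Matrix.smul_mul]
      congr 1
      simp only [Matrix.mul_assoc, Matrix.one_mul]
    rw [Finset.sum_congr rfl lhs_eq]
    have rhs_eq : ∀ j ∈ range d, z ^ j •
          (∑ k ∈ range (d - j), A (k + j + 1) * U * Lam ^ k * (Lam - S) * Vᴴ)
        = ∑ k ∈ range (d - j), z ^ j • (A (k + j + 1) * U * Lam ^ k * (Lam - S) * Vᴴ) := by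
      intro j _
      rw [Finset.smul_sum]
    rw [Finset.sum_congr rfl rhs_eq]
    rw [Finset.sum_sigma' (range (d + 1)) (fun i => range i)
      (fun i k => z ^ k • (A i * U * Lam ^ (i - 1 - k) * (Lam - S) * Vᴴ))]
    rw [Finset.sum_sigma' (range d) (fun j => range (d - j))
      (fun j k => z ^ j • (A (k + j + 1) * U * Lam ^ k * (Lam - S) * Vᴴ))]
    refine Finset.sum_nbij' (fun p => ⟨p.2, p.1 - 1 - p.2⟩) (fun p => ⟨p.2 + p.1 + 1, p.1⟩)
      ?_ ?_ ?_ ?_ ?_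
    · rintro ⟨i, k⟩ hp
      simp only [Finset.mem_sigma, Finset.mem_range] at hp ⊢
      omega
    · rintro ⟨j, k⟩ hp
      simp only [Finset.mem_sigma, Finset.mem_range] at hp ⊢
      omega
    · rintro ⟨i, k⟩ hp
      simp only [Finset.mem_sigma, Finset.mem_range] at hp
      simp only [Sigma.mk.inj_iff, heq_eq_eq]
      exact ⟨by omega, trivial⟩
    · rintro ⟨j, k⟩ hp
      simp only [Finset.mem_sigma, Finset.mem_range] at hp
      simp only [Sigma.mk.inj_iff, heq_eq_eq]
      exact ⟨trivial, by omega⟩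
    · rintro ⟨i, k⟩ hp
      simp only [Finset.mem_sigma, Finset.mem_range] at hp
      have h1 : i - 1 - k + k + 1 = i := by omega
      simp only [h1]
  refine ⟨main, ?_⟩
  rw [← main, Matrix.det_mul]
  have hdet1 : (1 + U * M⁻¹ * (Lam - S) * Vᴴ).det
      = (z • (1 : Matrix (Fin m) (Fin m) ℂ) - S).det / M.det := by
    have h1 : U * M⁻¹ * (Lam - S) * Vᴴ = U * (M⁻¹ * (Lam - S) * Vᴴ) := by
      simp only [Matrix.mul_assoc]
    rw [h1, Matrix.det_one_add_mul_comm]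
    have h2 : M⁻¹ * (Lam - S) * Vᴴ * U = M⁻¹ * (Lam - S) := by
      rw [Matrix.mul_assoc, hVU, Matrix.mul_one]
    rw [h2]
    have h3 : (1 : Matrix (Fin m) (Fin m) ℂ) + M⁻¹ * (Lam - S)
        = M⁻¹ * (z • (1 : Matrix (Fin m) (Fin m) ℂ) - S) := by
      have : (z • (1 : Matrix (Fin m) (Fin m) ℂ) - S) = M + (Lam - S) := by
        rw [hMdef, sub_add_sub_cancel]
      rw [this, Matrix.mul_add, hinvM]
    rw [h3, Matrix.det_mul, Matrix.det_nonsing_inv, Ring.inverse_eq_inv']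
    field_simp
  rw [hdet1]
  field_simp
end

section
/- Let A(z) = z^{-1}A_{-1} + A_0 + zA_1 admit the factorization (I - zR₊)K₊(I - z^{-1}G₊) with K₊ invertible, let A(λ)u = 0 with u ≠ 0, λ ≠ 0, I - λR₊ invertible, let v*u = 1, Q = uv*, and μ ∈ ℂ. Define Ã(z) = A(z)(I + ((λ-μ)/(z-λ))Q). Then Ã(z) = (I - zR₊)K₊(I - z^{-1}G̃₊) as Laurent polynomials, where G̃₊ = G₊ + (μ - λ)Q. Consequently R₊ solves X²Ã_{-1} + XÃ_0 + Ã_1 = 0 and G̃₊ solves Ã_{-1} + Ã_0X + Ã_1X² = 0, where Ã_1 = A_1, Ã_0 = A_0 + (λ-μ)A_1Q, Ã_{-1} = A_{-1} + (λ-μ)(A_0 + λA_1)Q. -/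
open Matrix

theorem shifted_factorization_quadratic (n : ℕ)
    (Am1 A0 A1 R K G : Matrix (Fin n) (Fin n) ℂ)
    (hK : IsUnit K)
    (h1 : A1 = -(R * K)) (h0 : A0 = K + R * K * G) (hm1 : Am1 = -(K * G))
    (lam mu : ℂ) (hlam : lam ≠ 0) (u v : Matrix (Fin n) (Fin 1) ℂ) (hu : u ≠ 0)
    (hAu : (lam⁻¹ • Am1 + A0 + lam • A1) * u = 0)
    (hR : IsUnit (1 - lam • R))
    (hv : (vᴴ * u) 0 0 = 1) :
    let Q := u * vᴴ
    let Gt := G + (mu - lam) • Q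
    let At1 := A1
    let At0 := A0 + (lam - mu) • (A1 * Q)
    let Atm1 := Am1 + (lam - mu) • ((A0 + lam • A1) * Q)
    (∀ z : ℂ, z ≠ 0 → z ≠ lam →
        (z⁻¹ • Am1 + A0 + z • A1) * (1 + ((lam - mu) / (z - lam)) • Q)
          = z⁻¹ • Atm1 + At0 + z • At1 ∧
        z⁻¹ • Atm1 + At0 + z • At1
          = (1 - z • R) * K * (1 - z⁻¹ • Gt)) ∧
      R ^ 2 * Atm1 + R * At0 + At1 = 0 ∧
      Atm1 + At0 * Gt + At1 * Gt ^ 2 = 0 := by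
  intro Q Gt At1 At0 Atm1
  -- factorization identity for all nonzero w
  have hA : ∀ w : ℂ, w ≠ 0 → ∀ H : Matrix (Fin n) (Fin n) ℂ,
      w⁻¹ • (-(K * H)) + (K + R * K * H) + w • (-(R * K))
        = (1 - w • R) * K * (1 - w⁻¹ • H) := by
    intro w hw H
    have : (1 - w • R) * K * (1 - w⁻¹ • H)
        = K - w⁻¹ • (K * H) - w • (R * K) + (w * w⁻¹) • (R * K * H) := by
      simp only [sub_mul, mul_sub, one_mul, mul_one, Matrix.smul_mul,
        Matrix.mul_smul, smul_smul]
      module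
    rw [this, mul_inv_cancel₀ hw, one_smul]
    module
  -- G * u = lam • u
  have hGu : G * u = lam • u := by
    have h := hAu
    rw [h1, h0, hm1, hA lam hlam G, Matrix.mul_assoc ((1 - lam • R) * K), Matrix.mul_assoc (1 - lam • R)] at h
    have h3 : K * ((1 - lam⁻¹ • G) * u) = 0 := by
      have hcan := congrArg (fun M => (↑hR.unit⁻¹ : Matrix (Fin n) (Fin n) ℂ) * M) h
      simp only [← Matrix.mul_assoc, Matrix.mul_zero] at hcan
      rw [hR.val_inv_mul, Matrix.one_mul] at hcan
      rw [Matrix.mul_assoc] at hcan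
      exact hcan
    have h4 : (1 - lam⁻¹ • G) * u = 0 := by
      have hcan := congrArg (fun M => (↑hK.unit⁻¹ : Matrix (Fin n) (Fin n) ℂ) * M) h3
      simp only [← Matrix.mul_assoc, Matrix.mul_zero] at hcan
      rw [hK.val_inv_mul, Matrix.one_mul] at hcan
      exact hcan
    have h5 : u - lam⁻¹ • (G * u) = 0 := by
      rw [← h4, Matrix.sub_mul, Matrix.one_mul, Matrix.smul_mul]
    have h6 := congrArg (fun M => lam • M) h5
    simp only [smul_sub, smul_smul, mul_inv_cancel₀ hlam, one_smul, smul_zero] at h6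
    rw [sub_eq_zero] at h6
    exact h6.symm
  have hQ : G * Q = lam • Q := by
    have e : G * (u * vᴴ) = lam • (u * vᴴ) := by
      rw [← Matrix.mul_assoc, hGu, Matrix.smul_mul]
    exact e
  -- structural identities for the tilde coefficients
  have hAt1 : At1 = -(R * K) := h1
  have hAt0 : At0 = K + R * K * Gt := by
    show A0 + (lam - mu) • (A1 * Q) = K + R * K * (G + (mu - lam) • Q)
    rw [h0, h1, mul_add, Matrix.mul_smul, neg_mul]
    module
  have hAtm1 : Atm1 = -(K * Gt) := by
    show Am1 + (lam - mu) • ((A0 + lam • A1) * Q) = -(K * (G + (mu - lam) • Q))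
    rw [hm1, h0, h1]
    have e : (K + R * K * G + lam • -(R * K)) * Q = K * Q := by
      rw [add_mul, add_mul, Matrix.smul_mul, mul_assoc (R * K), hQ,
        Matrix.mul_smul, neg_mul, smul_neg]
      abel
    rw [e, mul_add, Matrix.mul_smul]
    module
  refine ⟨?_, ?_, ?_⟩
  · intro z hz hzl
    have key : z⁻¹ • Atm1 + At0 + z • At1 = (1 - z • R) * K * (1 - z⁻¹ • Gt) := by
      rw [hAt1, hAt0, hAtm1, hA z hz Gt]
    refine ⟨?_, key⟩
    rw [key]
    have hAz : z⁻¹ • Am1 + A0 + z • A1 = (1 - z • R) * K * (1 - z⁻¹ • G) := by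
      rw [h1, h0, hm1, hA z hz G]
    have hzl' : z - lam ≠ 0 := sub_ne_zero.mpr hzl
    have expand : (1 - z⁻¹ • G) * (1 + ((lam - mu) / (z - lam)) • Q)
        = 1 - z⁻¹ • Gt := by
      show _ = 1 - z⁻¹ • (G + (mu - lam) • Q)
      rw [sub_mul, one_mul, mul_add, mul_one, Matrix.smul_mul, Matrix.mul_smul, hQ]
      have hzl'' : -lam + z ≠ 0 := by rw [neg_add_eq_sub]; exact hzl'
      match_scalars <;> field_simp <;> ring
    rw [hAz, mul_assoc ((1 - z • R) * K), expand]
  · rw [hAt1, hAt0, hAtm1]; noncomm_ring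
  · rw [hAt1, hAt0, hAtm1]; noncomm_ring
end

section
/- Let A(z) = Σ_{i=0}^d z^i A_i with A_d u = 0 for some u ≠ 0, let v*u = 1, Q = uv*, and μ ≠ 0. Define Ã(z) = A(z)(I - zμ^{-1}Q). Then Ã(z) = Σ_{i=0}^d z^i Ã_i (a polynomial of degree at most d) with Ã_0 = A_0 and Ã_i = A_i - μ^{-1}A_{i-1}Q for 1 ≤ i ≤ d, and det Ã(z) = det A(z) · (1 - z/μ). -/
open Matrix Finset

theorem shift_from_infinity (n d : ℕ)
    (A : ℕ → Matrix (Fin n) (Fin n) ℂ)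
    (u v : Matrix (Fin n) (Fin 1) ℂ) (hu : u ≠ 0)
    (hAd : A d * u = 0) (hv : (vᴴ * u) 0 0 = 1)
    (mu : ℂ) (hmu : mu ≠ 0)
    (At : ℕ → Matrix (Fin n) (Fin n) ℂ)
    (hAt0 : At 0 = A 0)
    (hAti : ∀ i, 1 ≤ i → i ≤ d → At i = A i - mu⁻¹ • (A (i - 1) * (u * vᴴ)))
    (z : ℂ) :
    (∑ i ∈ range (d + 1), z ^ i • A i) * (1 - (z * mu⁻¹) • (u * vᴴ))
        = ∑ i ∈ range (d + 1), z ^ i • At i ∧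
    (∑ i ∈ range (d + 1), z ^ i • At i).det
        = (∑ i ∈ range (d + 1), z ^ i • A i).det * (1 - z / mu) := by
  have key : (∑ i ∈ range (d + 1), z ^ i • A i) * (1 - (z * mu⁻¹) • (u * vᴴ))
      = ∑ i ∈ range (d + 1), z ^ i • At i := by
    have h1 : (∑ i ∈ range (d + 1), z ^ i • A i) * (1 - (z * mu⁻¹) • (u * vᴴ))
        = (∑ i ∈ range (d + 1), z ^ i • A i)
          - ∑ i ∈ range (d + 1), z ^ (i + 1) • (mu⁻¹ • (A i * (u * vᴴ))) := by
      rw [Matrix.mul_sub, Matrix.mul_one, Finset.sum_mul]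
      congr 1
      refine Finset.sum_congr rfl fun i _ => ?_
      rw [Matrix.smul_mul, Matrix.mul_smul, smul_smul, smul_smul]
      ring_nf
    rw [h1]
    -- split last term of second sum
    rw [Finset.sum_range_succ (fun i => z ^ (i + 1) • (mu⁻¹ • (A i * (u * vᴴ))))]
    have hAdQ : A d * (u * vᴴ) = 0 := by
      rw [← Matrix.mul_assoc, hAd, Matrix.zero_mul]
    rw [hAdQ, smul_zero, smul_zero, add_zero]
    rw [Finset.sum_range_succ' (fun i => z ^ i • At i), hAt0, pow_zero, one_smul]
    rw [Finset.sum_range_succ' (fun i => z ^ i • A i), pow_zero, one_smul]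
    have : ∑ i ∈ range d, z ^ (i + 1) • (mu⁻¹ • (A i * (u * vᴴ)))
        = ∑ i ∈ range d, (z ^ (i + 1) • A (i + 1) - z ^ (i + 1) • At (i + 1)) := by
      refine Finset.sum_congr rfl fun i hi => ?_
      have hi' : i + 1 ≤ d := Finset.mem_range.mp hi
      rw [hAti (i + 1) (Nat.le_add_left 1 i) hi']
      simp [smul_sub]
    rw [this, Finset.sum_sub_distrib]
    abel
  refine ⟨key, ?_⟩
  rw [← key, Matrix.det_mul]
  congr 1
  have h2 : (1 : Matrix (Fin n) (Fin n) ℂ) - (z * mu⁻¹) • (u * vᴴ)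
      = 1 + (((-(z * mu⁻¹)) • u) * vᴴ) := by
    rw [Matrix.smul_mul, neg_smul, ← sub_eq_add_neg]
  rw [h2, Matrix.det_one_add_mul_comm]
  have : vᴴ * ((-(z * mu⁻¹)) • u) = (-(z * mu⁻¹)) • (vᴴ * u) := by
    rw [Matrix.mul_smul]
  rw [this]
  rw [show ((1 : Matrix (Fin 1) (Fin 1) ℂ) + (-(z * mu⁻¹)) • (vᴴ * u)).det
      = ((1 : Matrix (Fin 1) (Fin 1) ℂ) + (-(z * mu⁻¹)) • (vᴴ * u)) 0 0 from
    Matrix.det_fin_one _]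
  simp only [Matrix.add_apply, Matrix.smul_apply, Matrix.one_apply_eq, hv, smul_eq_mul, mul_one]
  field_simp
  ring
end

section
/- Let A(z) = z^{-1}A_{-1} + A_0 + zA_1 = (I - zR₊)K₊(I - z^{-1}G₊) with K₊ invertible, and define H_i by H_i = G₊^{-i}H_0 for i < 0, H_0 = Σ_{j=0}^∞ G₊^j K₊^{-1} R₊^j, H_i = H_0 R₊^i for i > 0, assuming the spectral radii of G₊ and R₊ are both < 1 (so the series converges). Then for every z with ρ(G₊) < |z| < 1/ρ(R₊), one has A(z) · (Σ_{i∈ℤ} z^i H_i) = I, i.e., H(z) = Σ_i z^i H_i is the inverse of A(z). -/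
open Matrix

open Filter Topology
open scoped NNReal ENNReal

private lemma ev_nnnorm_pow_le {B : Type*} [NormedRing B] [NormedAlgebra ℂ B] [CompleteSpace B]
    (a : B) (r : ℝ≥0) (h : spectralRadius ℂ a < r) :
    ∀ᶠ m in atTop, ‖a ^ m‖₊ ≤ r ^ m := by
  have T := spectrum.pow_nnnorm_pow_one_div_tendsto_nhds_spectralRadius a
  have hev : ∀ᶠ m : ℕ in atTop, ((‖a ^ m‖₊ : ENNReal) ^ (1 / (m : ℝ))) < (r : ENNReal) :=
    T.eventually_lt_const h
  filter_upwards [hev, eventually_gt_atTop 0] with m hm hm0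
  have hm0' : (m : ℝ) ≠ 0 := Nat.cast_ne_zero.mpr hm0.ne'
  have hmr : (1 / (m : ℝ)) * m = 1 := by field_simp
  have h2 : (((‖a ^ m‖₊ : ENNReal) ^ (1 / (m : ℝ))) ^ (m : ℝ)) ≤ (r : ENNReal) ^ (m : ℝ) :=
    ENNReal.rpow_le_rpow hm.le (by positivity)
  rw [← ENNReal.rpow_mul, hmr, ENNReal.rpow_one, ENNReal.rpow_natCast] at h2
  exact_mod_cast h2

private lemma geom_facts {B : Type*} [NormedRing B] [CompleteSpace B] {a : B} {t : ℝ≥0}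
    (ht : t < 1) (hb : ∀ᶠ m in atTop, ‖a ^ m‖₊ ≤ t ^ m) :
    Summable (fun m : ℕ => ‖a ^ m‖) ∧ (1 - a) * (∑' m : ℕ, a ^ m) = 1 := by
  have hg : Summable (fun m : ℕ => (t : ℝ) ^ m) :=
    summable_geometric_of_lt_one t.coe_nonneg (by exact_mod_cast ht)
  have hnorm : Summable (fun m : ℕ => ‖a ^ m‖) := by
    apply Summable.of_norm_bounded_eventually_nat hg
    filter_upwards [hb] with m hm
    rw [norm_norm]
    exact_mod_cast hm
  have hsum : Summable (fun m : ℕ => a ^ m) := hnorm.of_norm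
  refine ⟨hnorm, ?_⟩
  have h0 : Tendsto (fun m : ℕ => a ^ m) atTop (𝓝 0) := hsum.tendsto_atTop_zero
  have h1 : Tendsto (fun N : ℕ => (1 - a) * ∑ i ∈ Finset.range N, a ^ i)
      atTop (𝓝 ((1 - a) * ∑' m : ℕ, a ^ m)) :=
    (hsum.hasSum.tendsto_sum_nat).const_mul _
  have h2 : ∀ N : ℕ, (1 - a) * ∑ i ∈ Finset.range N, a ^ i = 1 - a ^ N := by
    intro N
    calc (1 - a) * ∑ i ∈ Finset.range N, a ^ i
        = -((a - 1) * ∑ i ∈ Finset.range N, a ^ i) := by rw [← neg_mul, neg_sub]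
      _ = 1 - a ^ N := by rw [mul_geom_sum, neg_sub]
  simp only [h2] at h1
  have h3 : Tendsto (fun N : ℕ => 1 - a ^ N) atTop (𝓝 1) := by
    simpa using tendsto_const_nhds.sub h0
  exact tendsto_nhds_unique h1 h3

private def zEquiv : ℤ × ℕ ≃ ℕ × ℕ where
  toFun p := ((-p.1).toNat + p.2, p.2 + p.1.toNat)
  invFun p := ((p.2 : ℤ) - (p.1 : ℤ), min p.1 p.2)
  left_inv p := by
    obtain ⟨i, m⟩ := p
    simp only [Prod.mk.injEq]
    constructor <;> omega
  right_inv p := by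
    obtain ⟨j, k⟩ := p
    simp only [Prod.mk.injEq]
    constructor <;> omega

private lemma zEquiv_apply (p : ℤ × ℕ) : zEquiv p = ((-p.1).toNat + p.2, p.2 + p.1.toNat) := rfl

set_option maxHeartbeats 1000000 in
private theorem key {B : Type*} [NormedRing B] [NormedAlgebra ℂ B] [CompleteSpace B]
    (R K Ki G : B) (hKi : K * Ki = 1)
    (z : ℂ) (hz1 : spectralRadius ℂ G < (‖z‖₊ : ENNReal))
    (hz2 : (‖z‖₊ : ENNReal) * spectralRadius ℂ R < 1)
    (H : ℤ → B)
    (hH0 : H 0 = ∑' j : ℕ, G ^ j * Ki * R ^ j)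
    (hHneg : ∀ i : ℤ, i < 0 → H i = G ^ (-i).toNat * H 0)
    (hHpos : ∀ i : ℤ, 0 < i → H i = H 0 * R ^ i.toNat) :
    Summable (fun i : ℤ => z ^ i • H i) ∧
      (z⁻¹ • (-(K * G)) + (K + R * K * G) + z • (-(R * K))) * (∑' i : ℤ, z ^ i • H i) = 1 := by
  have hz0 : ‖z‖₊ ≠ 0 := by
    intro h
    rw [h, ENNReal.coe_zero] at hz1
    exact ENNReal.not_lt_zero hz1
  have hzz : z ≠ 0 := by simpa using hz0
  have hznn : (0 : ℝ≥0) < ‖z‖₊ := pos_iff_ne_zero.mpr hz0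
  obtain ⟨r, hGr0, hrz⟩ := ENNReal.lt_iff_exists_nnreal_btwn.mp hz1
  have hrz' : r < ‖z‖₊ := by exact_mod_cast hrz
  have hz2' : spectralRadius ℂ R < (↑‖z‖₊)⁻¹ := by
    by_contra hc
    push_neg at hc
    have h1 : (1 : ℝ≥0∞) ≤ (‖z‖₊ : ℝ≥0∞) * spectralRadius ℂ R := by
      calc (1 : ℝ≥0∞) = (‖z‖₊ : ℝ≥0∞) * (‖z‖₊ : ℝ≥0∞)⁻¹ :=
            (ENNReal.mul_inv_cancel (by exact_mod_cast hz0) ENNReal.coe_ne_top).symm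
        _ ≤ _ := mul_le_mul_right hc _
    exact absurd hz2 (not_lt.mpr h1)
  obtain ⟨s, hRs0, hsz⟩ := ENNReal.lt_iff_exists_nnreal_btwn.mp hz2'
  have hsz' : ‖z‖₊ * s < 1 := by
    have h2 : (‖z‖₊ : ℝ≥0∞) * s < (‖z‖₊ : ℝ≥0∞) * (‖z‖₊ : ℝ≥0∞)⁻¹ := by
      rw [ENNReal.mul_lt_mul_iff_right (by exact_mod_cast hz0) ENNReal.coe_ne_top]
      exact hsz
    rw [ENNReal.mul_inv_cancel (by exact_mod_cast hz0) ENNReal.coe_ne_top] at h2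
    exact_mod_cast h2
  have hGr : ∀ᶠ m in atTop, ‖G ^ m‖₊ ≤ r ^ m := ev_nnnorm_pow_le G r hGr0
  have hRs : ∀ᶠ m in atTop, ‖R ^ m‖₊ ≤ s ^ m := ev_nnnorm_pow_le R s hRs0
  set u := z⁻¹ • G with hu_def
  set v := z • R with hv_def
  have htu : r / ‖z‖₊ < 1 := by rwa [div_lt_one hznn]
  have hub : ∀ᶠ m in atTop, ‖u ^ m‖₊ ≤ (r / ‖z‖₊) ^ m := by
    filter_upwards [hGr] with m hm
    rw [hu_def, smul_pow, nnnorm_smul, nnnorm_pow, nnnorm_inv]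
    calc (‖z‖₊⁻¹) ^ m * ‖G ^ m‖₊ ≤ (‖z‖₊⁻¹) ^ m * r ^ m := mul_le_mul_right hm _
      _ = (r / ‖z‖₊) ^ m := by rw [← mul_pow, div_eq_mul_inv, mul_comm]
  have hvb : ∀ᶠ m in atTop, ‖v ^ m‖₊ ≤ (‖z‖₊ * s) ^ m := by
    filter_upwards [hRs] with m hm
    rw [hv_def, smul_pow, nnnorm_smul, nnnorm_pow]
    calc (‖z‖₊) ^ m * ‖R ^ m‖₊ ≤ (‖z‖₊) ^ m * s ^ m := mul_le_mul_right hm _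
      _ = (‖z‖₊ * s) ^ m := by rw [← mul_pow]
  obtain ⟨hnu, hgu⟩ := geom_facts htu hub
  obtain ⟨hnv, hgv⟩ := geom_facts hsz' hvb
  have hsu : Summable (fun m : ℕ => u ^ m) := hnu.of_norm
  have hsv : Summable (fun m : ℕ => v ^ m) := hnv.of_norm
  -- summability of the central family
  have hrs : r * s < 1 := lt_of_le_of_lt (mul_le_mul_left hrz'.le s) hsz'
  have hX : Summable (fun m : ℕ => G ^ m * Ki * R ^ m) := by
    apply Summable.of_norm_bounded_eventually_nat
      (g := fun m => ‖Ki‖ * ((r * s : ℝ≥0) : ℝ) ^ m)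
      ((summable_geometric_of_lt_one (by positivity) (by exact_mod_cast hrs)).mul_left _)
    filter_upwards [hGr, hRs] with m h1 h2
    have h1' : ‖G ^ m‖ ≤ ((r : ℝ)) ^ m := by exact_mod_cast h1
    have h2' : ‖R ^ m‖ ≤ ((s : ℝ)) ^ m := by exact_mod_cast h2
    calc ‖G ^ m * Ki * R ^ m‖ ≤ ‖G ^ m * Ki‖ * ‖R ^ m‖ := norm_mul_le _ _
      _ ≤ ‖G ^ m‖ * ‖Ki‖ * ‖R ^ m‖ := by
          gcongr
          exact norm_mul_le _ _
      _ ≤ ((r : ℝ)) ^ m * ‖Ki‖ * ((s : ℝ)) ^ m := by gcongr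
      _ = ‖Ki‖ * ((r * s : ℝ≥0) : ℝ) ^ m := by push_cast; ring
  -- product family
  have hnf : Summable (fun j : ℕ => ‖u ^ j * Ki‖) := by
    apply Summable.of_nonneg_of_le (fun _ => norm_nonneg _)
      (fun j => norm_mul_le _ _) (hnu.mul_right ‖Ki‖)
  have hprod : Summable (fun p : ℕ × ℕ => (u ^ p.1 * Ki) * v ^ p.2) :=
    summable_mul_of_summable_norm hnf hnv
  have hmm : (∑' j : ℕ, u ^ j * Ki) * (∑' m : ℕ, v ^ m)
      = ∑' p : ℕ × ℕ, (u ^ p.1 * Ki) * v ^ p.2 := tsum_mul_tsum_of_summable_norm hnf hnv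
  -- inner computation
  have hinner : ∀ i : ℤ,
      (∑' m : ℕ, ((u ^ ((-i).toNat + m) * Ki) * v ^ (m + i.toNat))) = z ^ i • H i := by
    intro i
    have hterm : ∀ m : ℕ, (u ^ ((-i).toNat + m) * Ki) * v ^ (m + i.toNat)
        = (algebraMap ℂ B (z ^ i) * G ^ (-i).toNat)
            * ((G ^ m * Ki * R ^ m) * R ^ i.toNat) := by
      intro m
      have hz_pow : (z⁻¹) ^ ((-i).toNat + m) * z ^ (m + i.toNat) = z ^ i := by
        have hzd : z ^ (((m + i.toNat : ℕ) : ℤ)) / z ^ ((((-i).toNat + m : ℕ)) : ℤ) = z ^ i := by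
          rw [← zpow_sub₀ hzz]
          congr 1
          omega
        rw [zpow_natCast, zpow_natCast] at hzd
        rw [inv_pow, ← hzd, div_eq_mul_inv, mul_comm]
      rw [hu_def, hv_def, smul_pow, smul_pow, smul_mul_assoc, smul_mul_assoc,
        mul_smul_comm, smul_smul, hz_pow, Algebra.smul_def, pow_add G, pow_add R]
      simp only [mul_assoc]
    calc (∑' m : ℕ, ((u ^ ((-i).toNat + m) * Ki) * v ^ (m + i.toNat)))
        = ∑' m : ℕ, (algebraMap ℂ B (z ^ i) * G ^ (-i).toNat)
            * ((G ^ m * Ki * R ^ m) * R ^ i.toNat) := tsum_congr hterm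
      _ = (algebraMap ℂ B (z ^ i) * G ^ (-i).toNat)
            * ∑' m : ℕ, ((G ^ m * Ki * R ^ m) * R ^ i.toNat) :=
          (hX.mul_right _).tsum_mul_left _
      _ = (algebraMap ℂ B (z ^ i) * G ^ (-i).toNat)
            * ((∑' m : ℕ, G ^ m * Ki * R ^ m) * R ^ i.toNat) := by rw [hX.tsum_mul_right]
      _ = z ^ i • H i := ?_
    rw [← hH0]
    rcases lt_trichotomy i 0 with hi | hi | hi
    · rw [hHneg i hi, Int.toNat_of_nonpos hi.le, pow_zero, mul_one, Algebra.smul_def, mul_assoc]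
    · subst hi
      norm_num [Algebra.smul_def]
    · rw [hHpos i hi, show (-i).toNat = 0 from Int.toNat_of_nonpos (by omega), pow_zero,
        mul_one, Algebra.smul_def]
  -- summability over ℤ
  have hFq : Summable (fun p : ℤ × ℕ => (u ^ ((zEquiv p).1) * Ki) * v ^ ((zEquiv p).2)) :=
    (zEquiv.summable_iff
      (f := fun p : ℕ × ℕ => (u ^ p.1 * Ki) * v ^ p.2)).mpr hprod
  have hFq' : ∀ p : ℤ × ℕ, (u ^ ((zEquiv p).1) * Ki) * v ^ ((zEquiv p).2)
      = (u ^ ((-p.1).toNat + p.2) * Ki) * v ^ (p.2 + p.1.toNat) := by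
    intro p; rw [zEquiv_apply]
  have hasm : Summable (fun i : ℤ => z ^ i • H i) := by
    have h2 := hFq.prod
    refine h2.congr fun i => ?_
    calc (∑' m : ℕ, (u ^ ((zEquiv (i, m)).1) * Ki) * v ^ ((zEquiv (i, m)).2))
        = ∑' m : ℕ, (u ^ ((-i).toNat + m) * Ki) * v ^ (m + i.toNat) :=
          tsum_congr fun m => hFq' (i, m)
      _ = z ^ i • H i := hinner i
  refine ⟨hasm, ?_⟩
  have hT : (∑' i : ℤ, z ^ i • H i) = ((∑' m : ℕ, u ^ m) * Ki) * (∑' m : ℕ, v ^ m) := by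
    calc (∑' i : ℤ, z ^ i • H i)
        = ∑' i : ℤ, ∑' m : ℕ, (u ^ ((zEquiv (i, m)).1) * Ki) * v ^ ((zEquiv (i, m)).2) := by
          refine tsum_congr fun i => ?_
          rw [← hinner i]
          exact (tsum_congr fun m => hFq' (i, m)).symm
      _ = ∑' p : ℤ × ℕ, (u ^ ((zEquiv p).1) * Ki) * v ^ ((zEquiv p).2) := (Summable.tsum_prod hFq).symm
      _ = ∑' p : ℕ × ℕ, (u ^ p.1 * Ki) * v ^ p.2 :=
          zEquiv.tsum_eq (fun p : ℕ × ℕ => (u ^ p.1 * Ki) * v ^ p.2)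
      _ = (∑' j : ℕ, u ^ j * Ki) * (∑' m : ℕ, v ^ m) := hmm.symm
      _ = ((∑' m : ℕ, u ^ m) * Ki) * (∑' m : ℕ, v ^ m) := by rw [hsu.tsum_mul_right]
  have hA : z⁻¹ • (-(K * G)) + (K + R * K * G) + z • (-(R * K))
      = (1 - v) * K * (1 - u) := by
    have h1 : v * K * u = R * K * G := by
      rw [hu_def, hv_def, smul_mul_assoc, smul_mul_assoc, mul_smul_comm, smul_smul,
        mul_inv_cancel₀ hzz, one_smul]
    have h2 : K * u = z⁻¹ • (K * G) := by rw [hu_def, mul_smul_comm]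
    have h3 : v * K = z • (R * K) := by rw [hv_def, smul_mul_assoc]
    have h4 : (1 - v) * K * (1 - u) = K - K * u - v * K + v * K * u := by noncomm_ring
    rw [h4, h1, h2, h3, smul_neg, smul_neg]
    abel
  rw [hA, hT]
  calc (1 - v) * K * (1 - u) * ((∑' m : ℕ, u ^ m) * Ki * (∑' m : ℕ, v ^ m))
      = (1 - v) * (K * ((((1 - u) * ∑' m : ℕ, u ^ m)) * (Ki * (∑' m : ℕ, v ^ m)))) := by
        simp only [mul_assoc]
    _ = (1 - v) * ((K * Ki) * (∑' m : ℕ, v ^ m)) := by rw [hgu, one_mul, mul_assoc]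
    _ = (1 - v) * (∑' m : ℕ, v ^ m) := by rw [hKi, one_mul]
    _ = 1 := hgv

theorem laurent_inverse_series (n : ℕ)
    (Am1 A0 A1 R K G : Matrix (Fin n) (Fin n) ℂ)
    (hK : IsUnit K)
    (h1 : A1 = -(R * K)) (h0 : A0 = K + R * K * G) (hm1 : Am1 = -(K * G))
    (hR : spectralRadius ℂ R < 1) (hG : spectralRadius ℂ G < 1)
    (H : ℤ → Matrix (Fin n) (Fin n) ℂ)
    (hH0 : H 0 = ∑' j : ℕ, G ^ j * K⁻¹ * R ^ j)
    (hHneg : ∀ i : ℤ, i < 0 → H i = G ^ (-i).toNat * H 0)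
    (hHpos : ∀ i : ℤ, 0 < i → H i = H 0 * R ^ i.toNat)
    (z : ℂ) (hz1 : spectralRadius ℂ G < (‖z‖₊ : ENNReal))
    (hz2 : (‖z‖₊ : ENNReal) * spectralRadius ℂ R < 1) :
    (z⁻¹ • Am1 + A0 + z • A1) * (∑' i : ℤ, z ^ i • H i) = 1 := by
  have hdet : IsUnit K.det := (Matrix.isUnit_iff_isUnit_det K).mp hK
  set e := Matrix.toEuclideanCLM (𝕜 := ℂ) (n := Fin n) with he
  have healg : ∀ c : ℂ, e.toRingEquiv (algebraMap ℂ _ c)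
      = algebraMap ℂ (EuclideanSpace ℂ (Fin n) →L[ℂ] EuclideanSpace ℂ (Fin n)) c := by
    intro c
    show e (algebraMap ℂ _ c) = _
    rw [Algebra.algebraMap_eq_smul_one, Algebra.algebraMap_eq_smul_one,
      _root_.map_smul, _root_.map_one]
  let eA : Matrix (Fin n) (Fin n) ℂ ≃ₐ[ℂ]
      (EuclideanSpace ℂ (Fin n) →L[ℂ] EuclideanSpace ℂ (Fin n)) :=
    AlgEquiv.ofRingEquiv healg
  let eC : Matrix (Fin n) (Fin n) ℂ ≃L[ℂ]
      (EuclideanSpace ℂ (Fin n) →L[ℂ] EuclideanSpace ℂ (Fin n)) :=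
    eA.toLinearEquiv.toContinuousLinearEquiv
  have heC : ∀ x, eC x = e x := fun _ => rfl
  have hspec : ∀ M : Matrix (Fin n) (Fin n) ℂ, spectralRadius ℂ (e M) = spectralRadius ℂ M := by
    intro M
    unfold spectralRadius
    rw [show spectrum ℂ (e M) = spectrum ℂ M from AlgEquiv.spectrum_eq eA M]
  have hKi : e K * e K⁻¹ = 1 := by
    rw [← _root_.map_mul, Matrix.mul_nonsing_inv K hdet, _root_.map_one]
  have hmapsum : ∀ (ι : Type) (f : ι → Matrix (Fin n) (Fin n) ℂ),
      e (∑' i : ι, f i) = ∑' i : ι, e (f i) := by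
    intro ι f
    rw [show e (∑' i, f i) = eC (∑' i, f i) from rfl, eC.map_tsum]
    exact tsum_congr fun i => heC (f i)
  obtain ⟨hs, hmain⟩ := key (e R) (e K) (e K⁻¹) (e G) hKi z
    (by rw [hspec]; exact hz1) (by rw [hspec]; exact hz2)
    (fun i => e (H i))
    (by
      show e (H 0) = _
      rw [hH0, hmapsum]
      exact tsum_congr fun j => by rw [_root_.map_mul, _root_.map_mul, _root_.map_pow, _root_.map_pow])
    (fun i hi => by
      show e (H i) = _
      rw [hHneg i hi, _root_.map_mul, _root_.map_pow])
    (fun i hi => by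
      show e (H i) = _
      rw [hHpos i hi, _root_.map_mul, _root_.map_pow])
  apply EquivLike.injective e
  show e ((z⁻¹ • Am1 + A0 + z • A1) * ∑' i : ℤ, z ^ i • H i) = e 1
  rw [_root_.map_one, _root_.map_mul]
  have hT : e (∑' i : ℤ, z ^ i • H i) = ∑' i : ℤ, z ^ i • e (H i) := by
    rw [hmapsum]
    exact tsum_congr fun i => _root_.map_smul e _ _
  rw [hT]
  have hM : e (z⁻¹ • Am1 + A0 + z • A1)
      = z⁻¹ • (-(e K * e G)) + (e K + e R * e K * e G) + z • (-(e R * e K)) := by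
    rw [h1, h0, hm1]
    simp only [_root_.map_add, _root_.map_smul, _root_.map_neg, _root_.map_mul]
  rw [hM]
  exact hmain
end

section
/- Under the hypotheses of the previous statement, if additionally H_0 = Σ_{j=0}^∞ G₊^j K₊^{-1} R₊^j is invertible, then A(z^{-1}) admits the factorization A(z^{-1}) = (I - zR₋)K₋(I - z^{-1}G₋) with G₋ = H_0 R₊ H_0^{-1}, R₋ = H_0^{-1} G₊ H_0, and K₋ = A_0 + A_{-1}G₋ = A_0 + R₋A_1. -/
open Matrix

theorem reversed_canonical_factorization (n : ℕ)
    (Am1 A0 A1 R K G : Matrix (Fin n) (Fin n) ℂ)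
    (hK : IsUnit K)
    (h1 : A1 = -(R * K)) (h0 : A0 = K + R * K * G) (hm1 : Am1 = -(K * G))
    (hR : spectralRadius ℂ R < 1) (hG : spectralRadius ℂ G < 1)
    (H0 : Matrix (Fin n) (Fin n) ℂ)
    (hH0 : H0 = ∑' j : ℕ, G ^ j * K⁻¹ * R ^ j)
    (hH0inv : IsUnit H0) :
    let Gm := H0 * R * H0⁻¹
    let Rm := H0⁻¹ * G * H0
    let Km := A0 + Am1 * Gm
    (∀ z : ℂ, z ≠ 0 →
        z • Am1 + A0 + z⁻¹ • A1 = (1 - z • Rm) * Km * (1 - z⁻¹ • Gm)) ∧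
      Km = A0 + Rm * A1 := by
  intro Gm Rm Km
  have hGm : Gm = H0 * R * H0⁻¹ := rfl
  have hRm : Rm = H0⁻¹ * G * H0 := rfl
  have hKm : Km = A0 + Am1 * Gm := rfl
  by_cases hs : Summable (fun j : ℕ => G ^ j * K⁻¹ * R ^ j)
  · -- summable case
    have hrel : H0 = K⁻¹ + G * H0 * R := by
      have hshift : ∀ j : ℕ, G ^ (j + 1) * K⁻¹ * R ^ (j + 1)
          = G * ((G ^ j * K⁻¹ * R ^ j) * R) := by
        intro j
        rw [pow_succ' G, pow_succ R]
        noncomm_ring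
      calc H0 = ∑' j : ℕ, G ^ j * K⁻¹ * R ^ j := hH0
        _ = G ^ 0 * K⁻¹ * R ^ 0 + ∑' j : ℕ, G ^ (j + 1) * K⁻¹ * R ^ (j + 1) :=
            Summable.tsum_eq_zero_add hs
        _ = K⁻¹ + ∑' j : ℕ, G * ((G ^ j * K⁻¹ * R ^ j) * R) := by
            rw [tsum_congr hshift]; simp
        _ = K⁻¹ + G * (∑' j : ℕ, G ^ j * K⁻¹ * R ^ j) * R := by
            congr 1
            rw [(hs.mul_right R).tsum_mul_left G, hs.tsum_mul_right R, ← mul_assoc]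
        _ = K⁻¹ + G * H0 * R := by rw [← hH0]
    have hKdet : IsUnit K.det := (Matrix.isUnit_iff_isUnit_det K).mp hK
    have hH0det : IsUnit H0.det := (Matrix.isUnit_iff_isUnit_det H0).mp hH0inv
    have hKinv : K * K⁻¹ = 1 := Matrix.mul_nonsing_inv K hKdet
    have hKinv' : K⁻¹ * K = 1 := Matrix.nonsing_inv_mul K hKdet
    have hE1 : H0 * H0⁻¹ = 1 := Matrix.mul_nonsing_inv H0 hH0det
    have hE2 : H0⁻¹ * H0 = 1 := Matrix.nonsing_inv_mul H0 hH0det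
    have hKH : K * H0 = 1 + K * G * H0 * R := by
      conv_lhs => rw [hrel]
      rw [mul_add, hKinv]
      noncomm_ring
    have hHK : H0 * K = 1 + G * H0 * R * K := by
      conv_lhs => rw [hrel]
      rw [add_mul, hKinv']
    have hKH2 : K * G * H0 * R = K * H0 - 1 := by
      rw [hKH]; noncomm_ring
    have hHK2 : G * H0 * R * K = H0 * K - 1 := by
      rw [hHK]; noncomm_ring
    -- lemA' : H0 * (K * G) * Gm = H0 * K - 1
    have lemA' : H0 * (K * G) * Gm = H0 * K - 1 := by
      calc H0 * (K * G) * Gm = H0 * (K * G * H0 * R) * H0⁻¹ := by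
            rw [hGm]; noncomm_ring
        _ = H0 * (K * H0 - 1) * H0⁻¹ := by rw [hKH2]
        _ = H0 * K * (H0 * H0⁻¹) - H0 * H0⁻¹ := by noncomm_ring
        _ = H0 * K - 1 := by rw [hE1, mul_one]
    -- key0 : Km * H0 = 1 + R * (K * G * H0)
    have GmH0 : Gm * H0 = H0 * R := by
      rw [hGm, Matrix.nonsing_inv_mul_cancel_right _ _ hH0det]
    have key0 : Km * H0 = 1 + R * (K * G * H0) := by
      calc Km * H0 = A0 * H0 + Am1 * (Gm * H0) := by rw [hKm]; noncomm_ring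
        _ = (K + R * K * G) * H0 + -(K * G) * (H0 * R) := by rw [h0, hm1, GmH0]
        _ = K * H0 + R * (K * G * H0) - K * G * H0 * R := by noncomm_ring
        _ = 1 + K * G * H0 * R + R * (K * G * H0) - K * G * H0 * R := by rw [hKH]
        _ = 1 + R * (K * G * H0) := by noncomm_ring
    -- hA : Km * Gm = R * K
    have hA : Km * Gm = R * K := by
      calc Km * Gm = Km * H0 * R * H0⁻¹ := by rw [hGm]; noncomm_ring
        _ = (1 + R * (K * G * H0)) * R * H0⁻¹ := by rw [key0]
        _ = R * (1 + K * G * H0 * R) * H0⁻¹ := by noncomm_ring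
        _ = R * (K * H0) * H0⁻¹ := by rw [← hKH]
        _ = R * (K * H0 * H0⁻¹) := by noncomm_ring
        _ = R * K := by rw [Matrix.mul_nonsing_inv_cancel_right _ _ hH0det]
    -- key0' : H0 * Km = 1 + H0 * R * (K * G)
    have key0' : H0 * Km = 1 + H0 * R * (K * G) := by
      calc H0 * Km = H0 * (K + R * K * G) + -(H0 * (K * G) * Gm) := by
            rw [hKm, h0, hm1]; noncomm_ring
        _ = H0 * (K + R * K * G) + -(H0 * K - 1) := by rw [lemA']
        _ = 1 + H0 * R * (K * G) := by noncomm_ring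
    -- hB : Rm * Km = K * G
    have hB : Rm * Km = K * G := by
      calc Rm * Km = H0⁻¹ * (G * (H0 * Km)) := by rw [hRm]; noncomm_ring
        _ = H0⁻¹ * (G * (1 + H0 * R * (K * G))) := by rw [key0']
        _ = H0⁻¹ * ((1 + G * H0 * R * K) * G) := by noncomm_ring
        _ = H0⁻¹ * (H0 * K * G) := by rw [← hHK]
        _ = H0⁻¹ * H0 * (K * G) := by noncomm_ring
        _ = K * G := by rw [hE2, one_mul]
    -- K * G * Gm = Rm * (R * K)
    have KGGm : K * G * Gm = H0⁻¹ * (H0 * K - 1) := by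
      have e1 : H0 * (K * G * Gm) = H0 * K - 1 := by
        rw [← lemA']; noncomm_ring
      calc K * G * Gm = H0⁻¹ * H0 * (K * G * Gm) := by rw [hE2, one_mul]
        _ = H0⁻¹ * (H0 * (K * G * Gm)) := by noncomm_ring
        _ = H0⁻¹ * (H0 * K - 1) := by rw [e1]
    have RmRK : Rm * (R * K) = H0⁻¹ * (H0 * K - 1) := by
      calc Rm * (R * K) = H0⁻¹ * (G * H0 * R * K) := by rw [hRm]; noncomm_ring
        _ = H0⁻¹ * (H0 * K - 1) := by rw [hHK2]
    -- hC : A0 = Km + Rm * (R * K)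
    have hC : A0 = Km + Rm * (R * K) := by
      rw [RmRK, ← KGGm, hKm, hm1]
      noncomm_ring
    constructor
    · intro z hz
      have hzz : z * z⁻¹ = 1 := mul_inv_cancel₀ hz
      have expand : (1 - z • Rm) * Km * (1 - z⁻¹ • Gm)
          = Km - z⁻¹ • (Km * Gm) - z • (Rm * Km) + (z * z⁻¹) • (Rm * (Km * Gm)) := by
        simp only [sub_mul, mul_sub, one_mul, mul_one, smul_mul_assoc,
          mul_smul_comm, mul_assoc]
        module
      rw [expand, hzz, one_smul, hA, hB, hC, h1, hm1]
      simp only [smul_neg]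
      abel
    · rw [hKm, hm1, h1]
      have h := KGGm.trans RmRK.symm
      rw [neg_mul, mul_neg, h]
  · -- non-summable: tsum is 0, so H0 = 0, but IsUnit H0 forces trivial ring
    have h0' : H0 = 0 := by rw [hH0, tsum_eq_zero_of_not_summable hs]
    rw [h0'] at hH0inv
    have h01 : (0 : Matrix (Fin n) (Fin n) ℂ) = 1 := isUnit_zero_iff.mp hH0inv
    have hall : ∀ X Y : Matrix (Fin n) (Fin n) ℂ, X = Y := by
      intro X Y
      calc X = X * 1 := (mul_one X).symm
        _ = X * 0 := by rw [h01]
        _ = Y * 0 := by rw [mul_zero, mul_zero]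
        _ = Y * 1 := by rw [h01]
        _ = Y := mul_one Y
    exact ⟨fun z _ => hall _ _, hall _ _⟩
end
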